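/- Let X be any normed space, let d ≥ 4 be an integer, let q ∈ [1,∞), and let p = log(5/2)/log 2. Then m(ℓ_p^d ⊕_q X) ≤ 6. -/

import Mathlib

set_option maxHeartbeats 1000000

/-- A set `A` in a normed space is `lam`-equilateral if `lam > 0` and the distance
between any two distinct points of `A` equals `lam`. -/
def EquilateralWith {E : Type*} [NormedAddCommGroup E] (A : Set E) (lam : ℝ) : Prop :=
  0 < lam ∧ A.Pairwise fun x y => ‖x - y‖ = lam

/-- A set is equilateral if it is `lam`-equilateral for some `lam > 0`. -/
def Equilateral {E : Type*} [NormedAddCommGroup E] (A : Set E) : Prop :=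
  ∃ lam : ℝ, EquilateralWith A lam

/-- An equilateral set is maximal if it is not properly contained in any equilateral set. -/
def MaximalEquilateral {E : Type*} [NormedAddCommGroup E] (A : Set E) : Prop :=
  Equilateral A ∧ ∀ B : Set E, Equilateral B → A ⊆ B → B = A

namespace Stmt11

/-! ### Pure real-number auxiliary lemmas -/

lemma rpow_inj_nonneg {t a b : ℝ} (ht : 0 < t) (ha : 0 ≤ a) (hb : 0 ≤ b)
    (h : a ^ t = b ^ t) : a = b := by
  have h1 : (a ^ t) ^ (1/t) = (b ^ t) ^ (1/t) := by rw [h]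
  rwa [← Real.rpow_mul ha, ← Real.rpow_mul hb, mul_one_div, div_self ht.ne',
    Real.rpow_one, Real.rpow_one] at h1

lemma abs_eq_of_P_eq {p a b : ℝ} (hp0 : 0 < p) (h : |a| ^ p = |b| ^ p) : |a| = |b| :=
  rpow_inj_nonneg hp0 (abs_nonneg a) (abs_nonneg b) h

lemma mid_two {z : ℝ} (h : |z| = |z - 2|) : z = 1 := by
  rcases abs_eq_abs.mp h with h1 | h1 <;> linarith

lemma mid_c {c z : ℝ} (hc : 0 < c) (h : |z - c| = |z - -c|) : z = 0 := by
  rcases abs_eq_abs.mp h with h1 | h1 <;> linarith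

/-! ### Vectors supported on the first four coordinates -/

/-- a vector in `Fin d → ℝ` supported on the first four coordinates -/
def vec4 (d : ℕ) (a b c e : ℝ) : Fin d → ℝ := fun i =>
  if (i : ℕ) = 0 then a else if (i : ℕ) = 1 then b else
  if (i : ℕ) = 2 then c else if (i : ℕ) = 3 then e else 0

lemma vec4_sub (d : ℕ) (a b c e a' b' c' e' : ℝ) :
    vec4 d a b c e - vec4 d a' b' c' e' = vec4 d (a-a') (b-b') (c-c') (e-e') := by
  funext i
  simp only [Pi.sub_apply, vec4]
  split_ifs <;> ring

lemma sum_vec4 {d : ℕ} (hd : 4 ≤ d) (G : ℝ → ℝ) (W : Fin d → ℝ) (a b c e : ℝ) :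
    ∑ i : Fin d, G (W i - vec4 d a b c e i) =
      G (W ⟨0, by omega⟩ - a) + G (W ⟨1, by omega⟩ - b) + G (W ⟨2, by omega⟩ - c)
        + G (W ⟨3, by omega⟩ - e)
        + ∑ i ∈ Finset.univ \ ({⟨0, by omega⟩, ⟨1, by omega⟩, ⟨2, by omega⟩, ⟨3, by omega⟩} :
            Finset (Fin d)), G (W i) := by
  classical
  set S : Finset (Fin d) := {⟨0, by omega⟩, ⟨1, by omega⟩, ⟨2, by omega⟩, ⟨3, by omega⟩} with hS
  have hsub : S ⊆ Finset.univ := Finset.subset_univ S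
  have hsplit := Finset.sum_sdiff (f := fun i => G (W i - vec4 d a b c e i)) hsub
  rw [← hsplit]
  have h1 : ∑ i ∈ S, G (W i - vec4 d a b c e i)
      = G (W ⟨0, by omega⟩ - a) + G (W ⟨1, by omega⟩ - b) + G (W ⟨2, by omega⟩ - c)
        + G (W ⟨3, by omega⟩ - e) := by
    rw [hS]
    rw [Finset.sum_insert (by simp [Fin.ext_iff]), Finset.sum_insert (by simp [Fin.ext_iff]),
      Finset.sum_insert (by simp [Fin.ext_iff]), Finset.sum_singleton]
    simp only [vec4]
    norm_num
    try ring
  have h2 : ∑ i ∈ Finset.univ \ S, G (W i - vec4 d a b c e i)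
      = ∑ i ∈ Finset.univ \ S, G (W i) := by
    apply Finset.sum_congr rfl
    intro i hi
    have hiS : i ∉ S := (Finset.mem_sdiff.mp hi).2
    have h0 : (i : ℕ) ≠ 0 ∧ (i : ℕ) ≠ 1 ∧ (i : ℕ) ≠ 2 ∧ (i : ℕ) ≠ 3 := by
      rw [hS] at hiS
      simp only [Finset.mem_insert, Finset.mem_singleton, Fin.ext_iff] at hiS
      push_neg at hiS
      exact_mod_cast hiS
    simp only [vec4, if_neg h0.1, if_neg h0.2.1, if_neg h0.2.2.1, if_neg h0.2.2.2, sub_zero]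
  rw [h1, h2]
  ring

lemma sum_vec4_eval {d : ℕ} (hd : 4 ≤ d) (G : ℝ → ℝ) (hG0 : G 0 = 0) (a b c e : ℝ) :
    ∑ i : Fin d, G (vec4 d a b c e i) = G a + G b + G c + G e := by
  classical
  set S : Finset (Fin d) := {⟨0, by omega⟩, ⟨1, by omega⟩, ⟨2, by omega⟩, ⟨3, by omega⟩} with hS
  have hsub : S ⊆ Finset.univ := Finset.subset_univ S
  have hsplit := Finset.sum_sdiff (f := fun i => G (vec4 d a b c e i)) hsub
  rw [← hsplit]
  have h1 : ∑ i ∈ S, G (vec4 d a b c e i) = G a + G b + G c + G e := by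
    rw [hS]
    rw [Finset.sum_insert (by simp [Fin.ext_iff]), Finset.sum_insert (by simp [Fin.ext_iff]),
      Finset.sum_insert (by simp [Fin.ext_iff]), Finset.sum_singleton]
    simp only [vec4]
    norm_num
    try ring
  have h2 : ∑ i ∈ Finset.univ \ S, G (vec4 d a b c e i) = 0 := by
    apply Finset.sum_eq_zero
    intro i hi
    have hiS : i ∉ S := (Finset.mem_sdiff.mp hi).2
    have h0 : (i : ℕ) ≠ 0 ∧ (i : ℕ) ≠ 1 ∧ (i : ℕ) ≠ 2 ∧ (i : ℕ) ≠ 3 := by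
      rw [hS] at hiS
      simp only [Finset.mem_insert, Finset.mem_singleton, Fin.ext_iff] at hiS
      push_neg at hiS
      exact_mod_cast hiS
    simp only [vec4, if_neg h0.1, if_neg h0.2.1, if_neg h0.2.2.1, if_neg h0.2.2.2]
    exact hG0
  rw [h1, h2, zero_add]

lemma sum_sub_vec4 {d : ℕ} {p : ℝ} (hd : 4 ≤ d) (hp0 : 0 < p) (a b c e a' b' c' e' : ℝ) :
    ∑ i : Fin d, |vec4 d a b c e i - vec4 d a' b' c' e' i| ^ p
      = |a - a'| ^ p + |b - b'| ^ p + |c - c'| ^ p + |e - e'| ^ p := by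
  have hpt : ∀ i : Fin d, vec4 d a b c e i - vec4 d a' b' c' e' i
      = vec4 d (a-a') (b-b') (c-c') (e-e') i := by
    intro i; rw [← Pi.sub_apply, vec4_sub]
  simp_rw [hpt]
  exact sum_vec4_eval hd (fun x => |x| ^ p)
    (by show |(0:ℝ)| ^ p = 0; rw [abs_zero, Real.zero_rpow hp0.ne']) _ _ _ _

lemma sum_vec4P {d : ℕ} {p : ℝ} (hd : 4 ≤ d) (hp0 : 0 < p) (W : Fin d → ℝ) (a b c e : ℝ) :
    ∑ i : Fin d, |W i - vec4 d a b c e i| ^ p =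
      |W ⟨0, by omega⟩ - a| ^ p + |W ⟨1, by omega⟩ - b| ^ p + |W ⟨2, by omega⟩ - c| ^ p
        + |W ⟨3, by omega⟩ - e| ^ p
        + ∑ i ∈ Finset.univ \ ({⟨0, by omega⟩, ⟨1, by omega⟩, ⟨2, by omega⟩, ⟨3, by omega⟩} :
            Finset (Fin d)), |W i| ^ p :=
  sum_vec4 hd (fun x => |x| ^ p) W a b c e

/-! ### The ambient space and the embedding of coordinate vectors -/

variable {X : Type*} [NormedAddCommGroup X] [NormedSpace ℝ X]
variable {d : ℕ} {p q : ℝ}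
variable [Fact (1 ≤ ENNReal.ofReal p)] [Fact (1 ≤ ENNReal.ofReal q)]

abbrev Sp (p : ℝ) (d : ℕ) (X : Type*) [NormedAddCommGroup X] (q : ℝ) :=
  WithLp (ENNReal.ofReal q) ((PiLp (ENNReal.ofReal p) fun _ : Fin d => ℝ) × X)

noncomputable def emb (p : ℝ) (q : ℝ) (X : Type*) [NormedAddCommGroup X] {d : ℕ}
    (f : Fin d → ℝ) : Sp p d X q :=
  (WithLp.equiv _ _).symm ((WithLp.equiv (ENNReal.ofReal p) _).symm f, 0)

lemma emb_sub (f g : Fin d → ℝ) :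
    emb p q X f - emb p q X g = emb p q X (f - g) := by
  simp only [emb, WithLp.equiv_symm_apply, ← WithLp.toLp_sub, Prod.mk_sub_mk, sub_zero]

lemma norm_emb (hp1 : 1 ≤ p) (hq1 : 1 ≤ q) (h2 : (2:ℝ) ^ p = 5/2) (f : Fin d → ℝ)
    (hf : ∑ i : Fin d, |f i| ^ p = 5/2) :
    ‖emb p q X f‖ = 2 := by
  have hp0 : 0 < p := lt_of_lt_of_le one_pos hp1
  have hq0 : 0 < q := lt_of_lt_of_le one_pos hq1
  have hpt : (ENNReal.ofReal p).toReal = p := ENNReal.toReal_ofReal hp0.le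
  have hqt : (ENNReal.ofReal q).toReal = q := ENNReal.toReal_ofReal hq0.le
  have hnormf : ‖(WithLp.equiv (ENNReal.ofReal p) _).symm f‖ = 2 := by
    rw [PiLp.norm_eq_sum (by rw [hpt]; exact hp0)]
    simp only [WithLp.equiv_symm_apply, PiLp.toLp_apply, hpt, Real.norm_eq_abs]
    rw [hf, ← h2, ← Real.rpow_mul (by norm_num : (0:ℝ) ≤ 2), mul_one_div,
      div_self hp0.ne', Real.rpow_one]
  rw [WithLp.prod_norm_eq_add (by rw [hqt]; exact hq0)]
  have h1 : (emb p q X f : Sp p d X q).fst = (WithLp.equiv (ENNReal.ofReal p) _).symm f := rfl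
  have h2' : (emb p q X f : Sp p d X q).snd = (0 : X) := rfl
  rw [h1, h2', hnormf, norm_zero, hqt,
    Real.zero_rpow hq0.ne', add_zero, ← Real.rpow_mul (by norm_num : (0:ℝ) ≤ 2),
    mul_one_div, div_self hq0.ne', Real.rpow_one]

lemma dist_pt (hd : 4 ≤ d) (hp1 : 1 ≤ p) (hq1 : 1 ≤ q) (h2 : (2:ℝ) ^ p = 5/2)
    {f g : Fin d → ℝ} (hfg : ∑ i : Fin d, |f i - g i| ^ p = 5/2) :
    ‖emb p q X f - emb p q X g‖ = 2 := by
  rw [emb_sub]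
  exact norm_emb hp1 hq1 h2 _ hfg

lemma sums_eq (hp1 : 1 ≤ p) (hq1 : 1 ≤ q) (z : Sp p d X q) (f g : Fin d → ℝ)
    (lam : ℝ) (hlam : 0 < lam)
    (hf : ‖z - emb p q X f‖ = lam) (hg : ‖z - emb p q X g‖ = lam) :
    ∑ i : Fin d, |z.fst i - f i| ^ p = ∑ i : Fin d, |z.fst i - g i| ^ p := by
  have hp0 : 0 < p := lt_of_lt_of_le one_pos hp1
  have hq0 : 0 < q := lt_of_lt_of_le one_pos hq1
  have hpt : (ENNReal.ofReal p).toReal = p := ENNReal.toReal_ofReal hp0.le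
  have hqt : (ENNReal.ofReal q).toReal = q := ENNReal.toReal_ofReal hq0.le
  have key : ∀ f : Fin d → ℝ, ‖z - emb p q X f‖ = lam →
      ((∑ i : Fin d, |z.fst i - f i| ^ p) ^ (1/p)) ^ q + ‖z.snd‖ ^ q = lam ^ q := by
    intro f hf
    have h1 : (z - emb p q X f).fst = z.fst - (WithLp.equiv (ENNReal.ofReal p) _).symm f := rfl
    have h2 : (z - emb p q X f).snd = z.snd - 0 := rfl
    rw [WithLp.prod_norm_eq_add (by rw [hqt]; exact hq0), h1, h2, sub_zero, hqt] at hf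
    have h3 : ‖z.fst - (WithLp.equiv (ENNReal.ofReal p) _).symm f‖
        = (∑ i : Fin d, |z.fst i - f i| ^ p) ^ (1/p) := by
      rw [PiLp.norm_eq_sum (by rw [hpt]; exact hp0), hpt]
      rfl
    rw [h3] at hf
    have hnn : (0:ℝ) ≤ ((∑ i : Fin d, |z.fst i - f i| ^ p) ^ (1/p)) ^ q + ‖z.snd‖ ^ q := by
      positivity
    calc ((∑ i : Fin d, |z.fst i - f i| ^ p) ^ (1/p)) ^ q + ‖z.snd‖ ^ q
        = ((((∑ i : Fin d, |z.fst i - f i| ^ p) ^ (1/p)) ^ q + ‖z.snd‖ ^ q) ^ (1/q)) ^ q := by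
          have hqq : (1/q) * q = 1 := by field_simp
          rw [← Real.rpow_mul hnn, hqq, Real.rpow_one]
      _ = lam ^ q := by rw [hf]
  have hkf := key f hf
  have hkg := key g hg
  have heq : ((∑ i : Fin d, |z.fst i - f i| ^ p) ^ (1/p)) ^ q
      = ((∑ i : Fin d, |z.fst i - g i| ^ p) ^ (1/p)) ^ q := by linarith
  have h4 : (∑ i : Fin d, |z.fst i - f i| ^ p) ^ (1/p)
      = (∑ i : Fin d, |z.fst i - g i| ^ p) ^ (1/p) :=
    rpow_inj_nonneg hq0 (by positivity) (by positivity) heq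
  exact rpow_inj_nonneg (by positivity) (by positivity) (by positivity) h4

/-! ### The main construction -/

theorem core (X : Type*) [NormedAddCommGroup X] [NormedSpace ℝ X]
    (d : ℕ) (hd : 4 ≤ d) (q : ℝ) (hq1 : 1 ≤ q)
    (p : ℝ) (hp : p = Real.log (5 / 2) / Real.log 2)
    [Fact (1 ≤ ENNReal.ofReal p)] [Fact (1 ≤ ENNReal.ofReal q)] :
    ∃ A : Set (Sp p d X q), MaximalEquilateral A ∧ A.Finite ∧ A.ncard ≤ 6 := by
  classical
  have hlog2 : (0:ℝ) < Real.log 2 := Real.log_pos (by norm_num)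
  have hp1 : 1 ≤ p := by
    rw [hp, le_div_iff₀ hlog2]
    simpa using Real.log_le_log (by norm_num) (by norm_num : (2:ℝ) ≤ 5/2)
  have hp0 : 0 < p := lt_of_lt_of_le one_pos hp1
  have hp2 : (2:ℝ) ^ p = 5/2 := by
    rw [Real.rpow_def_of_pos (by norm_num : (0:ℝ) < 2), hp]
    rw [mul_div_assoc', mul_comm, mul_div_assoc, div_self hlog2.ne', mul_one]
    exact Real.exp_log (by norm_num)
  obtain ⟨c, hc0, hcp⟩ : ∃ c : ℝ, 0 < c ∧ c ^ p = 1/2 :=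
    ⟨((1:ℝ)/2) ^ (1/p), Real.rpow_pos_of_pos (by norm_num) _, by
      rw [← Real.rpow_mul (by norm_num : (0:ℝ) ≤ 1/2), one_div_mul_cancel hp0.ne',
        Real.rpow_one]⟩
  have vP0 : |(0:ℝ)| ^ p = 0 := by rw [abs_zero, Real.zero_rpow hp0.ne']
  have vP1 : |(1:ℝ)| ^ p = 1 := by rw [abs_one, Real.one_rpow]
  have vPm1 : |(-1:ℝ)| ^ p = 1 := by rw [abs_neg, abs_one, Real.one_rpow]
  have vP2 : |(2:ℝ)| ^ p = 5/2 := by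
    rw [abs_of_nonneg (by norm_num : (0:ℝ) ≤ 2)]; exact hp2
  have vPm2 : |(-2:ℝ)| ^ p = 5/2 := by rw [abs_neg]; exact vP2
  have vPc : |c| ^ p = 1/2 := by rw [abs_of_nonneg hc0.le]; exact hcp
  have vPmc : |(-c)| ^ p = 1/2 := by rw [abs_neg]; exact vPc
  have vP2c : |2*c| ^ p = 5/4 := by
    rw [abs_of_nonneg (by positivity), Real.mul_rpow (by norm_num) hc0.le, hp2, hcp]
    norm_num
  have vPm2c : |(-(2*c))| ^ p = 5/4 := by rw [abs_neg]; exact vP2c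
  have h12 : ‖emb p q X (vec4 d (0) (0) (0) (0)) - emb p q X (vec4 d (0) (2) (0) (0))‖ = 2 := by
    apply dist_pt hd hp1 hq1 hp2
    rw [sum_sub_vec4 hd hp0]
    rw [show ((0):ℝ) - ((0)) = ((0)) from by ring, show ((0):ℝ) - ((2)) = ((-2)) from by ring]
    rw [vP0, vPm2]
    norm_num
  have h13 : ‖emb p q X (vec4 d (0) (0) (0) (0)) - emb p q X (vec4 d (c) (1) (c) (c))‖ = 2 := by
    apply dist_pt hd hp1 hq1 hp2
    rw [sum_sub_vec4 hd hp0]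
    rw [show ((0):ℝ) - ((c)) = ((-c)) from by ring, show ((0):ℝ) - ((1)) = ((-1)) from by ring]
    rw [vPmc, vPm1]
    norm_num
  have h14 : ‖emb p q X (vec4 d (0) (0) (0) (0)) - emb p q X (vec4 d (c) (1) (-c) (-c))‖ = 2 := by
    apply dist_pt hd hp1 hq1 hp2
    rw [sum_sub_vec4 hd hp0]
    rw [show ((0):ℝ) - ((c)) = ((-c)) from by ring, show ((0):ℝ) - ((1)) = ((-1)) from by ring, show ((0):ℝ) - ((-c)) = ((c)) from by ring]
    rw [vPmc, vPm1, vPc]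
    norm_num
  have h15 : ‖emb p q X (vec4 d (0) (0) (0) (0)) - emb p q X (vec4 d (-c) (1) (c) (-c))‖ = 2 := by
    apply dist_pt hd hp1 hq1 hp2
    rw [sum_sub_vec4 hd hp0]
    rw [show ((0):ℝ) - ((-c)) = ((c)) from by ring, show ((0):ℝ) - ((1)) = ((-1)) from by ring, show ((0):ℝ) - ((c)) = ((-c)) from by ring]
    rw [vPc, vPm1, vPmc]
    norm_num
  have h16 : ‖emb p q X (vec4 d (0) (0) (0) (0)) - emb p q X (vec4 d (-c) (1) (-c) (c))‖ = 2 := by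
    apply dist_pt hd hp1 hq1 hp2
    rw [sum_sub_vec4 hd hp0]
    rw [show ((0):ℝ) - ((-c)) = ((c)) from by ring, show ((0):ℝ) - ((1)) = ((-1)) from by ring, show ((0):ℝ) - ((c)) = ((-c)) from by ring]
    rw [vPc, vPm1, vPmc]
    norm_num
  have h23 : ‖emb p q X (vec4 d (0) (2) (0) (0)) - emb p q X (vec4 d (c) (1) (c) (c))‖ = 2 := by
    apply dist_pt hd hp1 hq1 hp2
    rw [sum_sub_vec4 hd hp0]
    rw [show ((0):ℝ) - ((c)) = ((-c)) from by ring, show ((2):ℝ) - ((1)) = ((1)) from by ring]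
    rw [vPmc, vP1]
    norm_num
  have h24 : ‖emb p q X (vec4 d (0) (2) (0) (0)) - emb p q X (vec4 d (c) (1) (-c) (-c))‖ = 2 := by
    apply dist_pt hd hp1 hq1 hp2
    rw [sum_sub_vec4 hd hp0]
    rw [show ((0):ℝ) - ((c)) = ((-c)) from by ring, show ((2):ℝ) - ((1)) = ((1)) from by ring, show ((0):ℝ) - ((-c)) = ((c)) from by ring]
    rw [vPmc, vP1, vPc]
    norm_num
  have h25 : ‖emb p q X (vec4 d (0) (2) (0) (0)) - emb p q X (vec4 d (-c) (1) (c) (-c))‖ = 2 := by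
    apply dist_pt hd hp1 hq1 hp2
    rw [sum_sub_vec4 hd hp0]
    rw [show ((0):ℝ) - ((-c)) = ((c)) from by ring, show ((2):ℝ) - ((1)) = ((1)) from by ring, show ((0):ℝ) - ((c)) = ((-c)) from by ring]
    rw [vPc, vP1, vPmc]
    norm_num
  have h26 : ‖emb p q X (vec4 d (0) (2) (0) (0)) - emb p q X (vec4 d (-c) (1) (-c) (c))‖ = 2 := by
    apply dist_pt hd hp1 hq1 hp2
    rw [sum_sub_vec4 hd hp0]
    rw [show ((0):ℝ) - ((-c)) = ((c)) from by ring, show ((2):ℝ) - ((1)) = ((1)) from by ring, show ((0):ℝ) - ((c)) = ((-c)) from by ring]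
    rw [vPc, vP1, vPmc]
    norm_num
  have h34 : ‖emb p q X (vec4 d (c) (1) (c) (c)) - emb p q X (vec4 d (c) (1) (-c) (-c))‖ = 2 := by
    apply dist_pt hd hp1 hq1 hp2
    rw [sum_sub_vec4 hd hp0]
    rw [show ((c):ℝ) - ((c)) = ((0)) from by ring, show ((1):ℝ) - ((1)) = ((0)) from by ring, show ((c):ℝ) - ((-c)) = ((2*c)) from by ring]
    rw [vP0, vP2c]
    norm_num
  have h35 : ‖emb p q X (vec4 d (c) (1) (c) (c)) - emb p q X (vec4 d (-c) (1) (c) (-c))‖ = 2 := by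
    apply dist_pt hd hp1 hq1 hp2
    rw [sum_sub_vec4 hd hp0]
    rw [show ((c):ℝ) - ((-c)) = ((2*c)) from by ring, show ((1):ℝ) - ((1)) = ((0)) from by ring, show ((c):ℝ) - ((c)) = ((0)) from by ring]
    rw [vP2c, vP0]
    norm_num
  have h36 : ‖emb p q X (vec4 d (c) (1) (c) (c)) - emb p q X (vec4 d (-c) (1) (-c) (c))‖ = 2 := by
    apply dist_pt hd hp1 hq1 hp2
    rw [sum_sub_vec4 hd hp0]
    rw [show ((c):ℝ) - ((-c)) = ((2*c)) from by ring, show ((1):ℝ) - ((1)) = ((0)) from by ring, show ((c):ℝ) - ((c)) = ((0)) from by ring]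
    rw [vP2c, vP0]
    norm_num
  have h45 : ‖emb p q X (vec4 d (c) (1) (-c) (-c)) - emb p q X (vec4 d (-c) (1) (c) (-c))‖ = 2 := by
    apply dist_pt hd hp1 hq1 hp2
    rw [sum_sub_vec4 hd hp0]
    rw [show ((c):ℝ) - ((-c)) = ((2*c)) from by ring, show ((1):ℝ) - ((1)) = ((0)) from by ring, show ((-c):ℝ) - ((c)) = ((-(2*c))) from by ring, show ((-c):ℝ) - ((-c)) = ((0)) from by ring]
    rw [vP2c, vP0, vPm2c]
    norm_num
  have h46 : ‖emb p q X (vec4 d (c) (1) (-c) (-c)) - emb p q X (vec4 d (-c) (1) (-c) (c))‖ = 2 := by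
    apply dist_pt hd hp1 hq1 hp2
    rw [sum_sub_vec4 hd hp0]
    rw [show ((c):ℝ) - ((-c)) = ((2*c)) from by ring, show ((1):ℝ) - ((1)) = ((0)) from by ring, show ((-c):ℝ) - ((-c)) = ((0)) from by ring, show ((-c):ℝ) - ((c)) = ((-(2*c))) from by ring]
    rw [vP2c, vP0, vPm2c]
    norm_num
  have h56 : ‖emb p q X (vec4 d (-c) (1) (c) (-c)) - emb p q X (vec4 d (-c) (1) (-c) (c))‖ = 2 := by
    apply dist_pt hd hp1 hq1 hp2
    rw [sum_sub_vec4 hd hp0]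
    rw [show ((-c):ℝ) - ((-c)) = ((0)) from by ring, show ((1):ℝ) - ((1)) = ((0)) from by ring, show ((c):ℝ) - ((-c)) = ((2*c)) from by ring, show ((-c):ℝ) - ((c)) = ((-(2*c))) from by ring]
    rw [vP0, vP2c, vPm2c]
    norm_num

  have h21 : ‖emb p q X (vec4 d (0) (2) (0) (0)) - emb p q X (vec4 d (0) (0) (0) (0))‖ = 2 := by rw [norm_sub_rev]; exact h12
  have h31 : ‖emb p q X (vec4 d (c) (1) (c) (c)) - emb p q X (vec4 d (0) (0) (0) (0))‖ = 2 := by rw [norm_sub_rev]; exact h13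
  have h41 : ‖emb p q X (vec4 d (c) (1) (-c) (-c)) - emb p q X (vec4 d (0) (0) (0) (0))‖ = 2 := by rw [norm_sub_rev]; exact h14
  have h51 : ‖emb p q X (vec4 d (-c) (1) (c) (-c)) - emb p q X (vec4 d (0) (0) (0) (0))‖ = 2 := by rw [norm_sub_rev]; exact h15
  have h61 : ‖emb p q X (vec4 d (-c) (1) (-c) (c)) - emb p q X (vec4 d (0) (0) (0) (0))‖ = 2 := by rw [norm_sub_rev]; exact h16
  have h32 : ‖emb p q X (vec4 d (c) (1) (c) (c)) - emb p q X (vec4 d (0) (2) (0) (0))‖ = 2 := by rw [norm_sub_rev]; exact h23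
  have h42 : ‖emb p q X (vec4 d (c) (1) (-c) (-c)) - emb p q X (vec4 d (0) (2) (0) (0))‖ = 2 := by rw [norm_sub_rev]; exact h24
  have h52 : ‖emb p q X (vec4 d (-c) (1) (c) (-c)) - emb p q X (vec4 d (0) (2) (0) (0))‖ = 2 := by rw [norm_sub_rev]; exact h25
  have h62 : ‖emb p q X (vec4 d (-c) (1) (-c) (c)) - emb p q X (vec4 d (0) (2) (0) (0))‖ = 2 := by rw [norm_sub_rev]; exact h26
  have h43 : ‖emb p q X (vec4 d (c) (1) (-c) (-c)) - emb p q X (vec4 d (c) (1) (c) (c))‖ = 2 := by rw [norm_sub_rev]; exact h34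
  have h53 : ‖emb p q X (vec4 d (-c) (1) (c) (-c)) - emb p q X (vec4 d (c) (1) (c) (c))‖ = 2 := by rw [norm_sub_rev]; exact h35
  have h63 : ‖emb p q X (vec4 d (-c) (1) (-c) (c)) - emb p q X (vec4 d (c) (1) (c) (c))‖ = 2 := by rw [norm_sub_rev]; exact h36
  have h54 : ‖emb p q X (vec4 d (-c) (1) (c) (-c)) - emb p q X (vec4 d (c) (1) (-c) (-c))‖ = 2 := by rw [norm_sub_rev]; exact h45
  have h64 : ‖emb p q X (vec4 d (-c) (1) (-c) (c)) - emb p q X (vec4 d (c) (1) (-c) (-c))‖ = 2 := by rw [norm_sub_rev]; exact h46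
  have h65 : ‖emb p q X (vec4 d (-c) (1) (-c) (c)) - emb p q X (vec4 d (-c) (1) (c) (-c))‖ = 2 := by rw [norm_sub_rev]; exact h56
  -- the set A
  set A : Set (Sp p d X q) := {(emb p q X (vec4 d (0) (0) (0) (0))), (emb p q X (vec4 d (0) (2) (0) (0))), (emb p q X (vec4 d (c) (1) (c) (c))), (emb p q X (vec4 d (c) (1) (-c) (-c))), (emb p q X (vec4 d (-c) (1) (c) (-c))), (emb p q X (vec4 d (-c) (1) (-c) (c)))} with hA
  have mem1 : emb p q X (vec4 d (0) (0) (0) (0)) ∈ A := by rw [hA]; simp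
  have mem2 : emb p q X (vec4 d (0) (2) (0) (0)) ∈ A := by rw [hA]; simp
  have mem3 : emb p q X (vec4 d (c) (1) (c) (c)) ∈ A := by rw [hA]; simp
  have mem4 : emb p q X (vec4 d (c) (1) (-c) (-c)) ∈ A := by rw [hA]; simp
  have mem5 : emb p q X (vec4 d (-c) (1) (c) (-c)) ∈ A := by rw [hA]; simp
  have mem6 : emb p q X (vec4 d (-c) (1) (-c) (c)) ∈ A := by rw [hA]; simp
  have hpair : A.Pairwise (fun x y => ‖x - y‖ = 2) := by
    intro x hx y hy hxy
    rw [hA] at hx hy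
    simp only [Set.mem_insert_iff, Set.mem_singleton_iff] at hx hy
    rcases hx with rfl|rfl|rfl|rfl|rfl|rfl
    · rcases hy with rfl|rfl|rfl|rfl|rfl|rfl
      · exact absurd rfl hxy
      · exact h12
      · exact h13
      · exact h14
      · exact h15
      · exact h16
    · rcases hy with rfl|rfl|rfl|rfl|rfl|rfl
      · exact h21
      · exact absurd rfl hxy
      · exact h23
      · exact h24
      · exact h25
      · exact h26
    · rcases hy with rfl|rfl|rfl|rfl|rfl|rfl
      · exact h31
      · exact h32
      · exact absurd rfl hxy
      · exact h34
      · exact h35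
      · exact h36
    · rcases hy with rfl|rfl|rfl|rfl|rfl|rfl
      · exact h41
      · exact h42
      · exact h43
      · exact absurd rfl hxy
      · exact h45
      · exact h46
    · rcases hy with rfl|rfl|rfl|rfl|rfl|rfl
      · exact h51
      · exact h52
      · exact h53
      · exact h54
      · exact absurd rfl hxy
      · exact h56
    · rcases hy with rfl|rfl|rfl|rfl|rfl|rfl
      · exact h61
      · exact h62
      · exact h63
      · exact h64
      · exact h65
      · exact absurd rfl hxy
  have hEquil : Equilateral A := ⟨2, by norm_num, hpair⟩
  have hFin : A.Finite := by
    rw [hA]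
    exact (((((Set.finite_singleton _).insert _).insert _).insert _).insert _).insert _
  have hCard : A.ncard ≤ 6 := by
    rw [hA]
    have g1 := Set.ncard_insert_le (emb p q X (vec4 d (0) (0) (0) (0))) ({(emb p q X (vec4 d (0) (2) (0) (0))), (emb p q X (vec4 d (c) (1) (c) (c))), (emb p q X (vec4 d (c) (1) (-c) (-c))), (emb p q X (vec4 d (-c) (1) (c) (-c))), (emb p q X (vec4 d (-c) (1) (-c) (c)))} : Set (Sp p d X q))
    have g2 := Set.ncard_insert_le (emb p q X (vec4 d (0) (2) (0) (0))) ({(emb p q X (vec4 d (c) (1) (c) (c))), (emb p q X (vec4 d (c) (1) (-c) (-c))), (emb p q X (vec4 d (-c) (1) (c) (-c))), (emb p q X (vec4 d (-c) (1) (-c) (c)))} : Set (Sp p d X q))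
    have g3 := Set.ncard_insert_le (emb p q X (vec4 d (c) (1) (c) (c))) ({(emb p q X (vec4 d (c) (1) (-c) (-c))), (emb p q X (vec4 d (-c) (1) (c) (-c))), (emb p q X (vec4 d (-c) (1) (-c) (c)))} : Set (Sp p d X q))
    have g4 := Set.ncard_insert_le (emb p q X (vec4 d (c) (1) (-c) (-c))) ({(emb p q X (vec4 d (-c) (1) (c) (-c))), (emb p q X (vec4 d (-c) (1) (-c) (c)))} : Set (Sp p d X q))
    have g5 := Set.ncard_insert_le (emb p q X (vec4 d (-c) (1) (c) (-c))) ({(emb p q X (vec4 d (-c) (1) (-c) (c)))} : Set (Sp p d X q))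
    have g6 : ({(emb p q X (vec4 d (-c) (1) (-c) (c)))} : Set (Sp p d X q)).ncard = 1 := Set.ncard_singleton _
    omega
  refine ⟨A, ⟨hEquil, ?_⟩, hFin, hCard⟩
  -- maximality
  intro B hB hAB
  refine Set.Subset.antisymm ?_ hAB
  intro z hzB
  by_contra hzA
  obtain ⟨lam, hlam0, hBpw⟩ := hB
  have hne12 : (emb p q X (vec4 d (0) (0) (0) (0))) ≠ (emb p q X (vec4 d (0) (2) (0) (0))) := by
    intro h
    rw [h, sub_self, norm_zero] at h12
    norm_num at h12
  have hlam2 : lam = 2 := by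
    rw [← hBpw (hAB mem1) (hAB mem2) hne12]
    exact h12
  have hz1 : ‖z - emb p q X (vec4 d (0) (0) (0) (0))‖ = 2 := by
    have hzz := hBpw hzB (hAB mem1) (fun h => hzA (by rw [h]; exact mem1))
    rwa [hlam2] at hzz
  have hz2 : ‖z - emb p q X (vec4 d (0) (2) (0) (0))‖ = 2 := by
    have hzz := hBpw hzB (hAB mem2) (fun h => hzA (by rw [h]; exact mem2))
    rwa [hlam2] at hzz
  have hz3 : ‖z - emb p q X (vec4 d (c) (1) (c) (c))‖ = 2 := by
    have hzz := hBpw hzB (hAB mem3) (fun h => hzA (by rw [h]; exact mem3))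
    rwa [hlam2] at hzz
  have hz4 : ‖z - emb p q X (vec4 d (c) (1) (-c) (-c))‖ = 2 := by
    have hzz := hBpw hzB (hAB mem4) (fun h => hzA (by rw [h]; exact mem4))
    rwa [hlam2] at hzz
  have hz5 : ‖z - emb p q X (vec4 d (-c) (1) (c) (-c))‖ = 2 := by
    have hzz := hBpw hzB (hAB mem5) (fun h => hzA (by rw [h]; exact mem5))
    rwa [hlam2] at hzz
  have hz6 : ‖z - emb p q X (vec4 d (-c) (1) (-c) (c))‖ = 2 := by
    have hzz := hBpw hzB (hAB mem6) (fun h => hzA (by rw [h]; exact mem6))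
    rwa [hlam2] at hzz
  have s12 : (∑ i : Fin d, |z.fst i - vec4 d (0) (0) (0) (0) i| ^ p) = (∑ i : Fin d, |z.fst i - vec4 d (0) (2) (0) (0) i| ^ p) := by
    exact sums_eq hp1 hq1 z _ _ 2 (by norm_num) hz1 hz2
  rw [sum_vec4P hd hp0 z.fst, sum_vec4P hd hp0 z.fst] at s12
  have s36 : (∑ i : Fin d, |z.fst i - vec4 d (c) (1) (c) (c) i| ^ p) = (∑ i : Fin d, |z.fst i - vec4 d (-c) (1) (-c) (c) i| ^ p) := by
    exact sums_eq hp1 hq1 z _ _ 2 (by norm_num) hz3 hz6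
  rw [sum_vec4P hd hp0 z.fst, sum_vec4P hd hp0 z.fst] at s36
  have s45 : (∑ i : Fin d, |z.fst i - vec4 d (c) (1) (-c) (-c) i| ^ p) = (∑ i : Fin d, |z.fst i - vec4 d (-c) (1) (c) (-c) i| ^ p) := by
    exact sums_eq hp1 hq1 z _ _ 2 (by norm_num) hz4 hz5
  rw [sum_vec4P hd hp0 z.fst, sum_vec4P hd hp0 z.fst] at s45
  have s34 : (∑ i : Fin d, |z.fst i - vec4 d (c) (1) (c) (c) i| ^ p) = (∑ i : Fin d, |z.fst i - vec4 d (c) (1) (-c) (-c) i| ^ p) := by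
    exact sums_eq hp1 hq1 z _ _ 2 (by norm_num) hz3 hz4
  rw [sum_vec4P hd hp0 z.fst, sum_vec4P hd hp0 z.fst] at s34
  have s13 : (∑ i : Fin d, |z.fst i - vec4 d (0) (0) (0) (0) i| ^ p) = (∑ i : Fin d, |z.fst i - vec4 d (c) (1) (c) (c) i| ^ p) := by
    exact sums_eq hp1 hq1 z _ _ 2 (by norm_num) hz1 hz3
  rw [sum_vec4P hd hp0 z.fst, sum_vec4P hd hp0 z.fst] at s13

  -- notation for the four relevant coordinates of z
  -- s12 gives z₂ = 1, s36 + s45 give z₀ = 0 and z₂' = 0, s34 gives z₃ = 0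
  have q12 : |z.fst ⟨1, by omega⟩ - (2:ℝ)| ^ p = |z.fst ⟨1, by omega⟩ - (0:ℝ)| ^ p := by
    linarith
  have hy : z.fst ⟨1, by omega⟩ = 1 := by
    rw [sub_zero] at q12
    exact mid_two (abs_eq_of_P_eq hp0 q12.symm)
  have q1 : |z.fst ⟨0, by omega⟩ - c| ^ p = |z.fst ⟨0, by omega⟩ - (-c)| ^ p := by
    linarith
  have hx : z.fst ⟨0, by omega⟩ = 0 := mid_c hc0 (abs_eq_of_P_eq hp0 q1)
  have q3 : |z.fst ⟨2, by omega⟩ - c| ^ p = |z.fst ⟨2, by omega⟩ - (-c)| ^ p := by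
    linarith
  have hz3' : z.fst ⟨2, by omega⟩ = 0 := mid_c hc0 (abs_eq_of_P_eq hp0 q3)
  have q4 : |z.fst ⟨3, by omega⟩ - c| ^ p = |z.fst ⟨3, by omega⟩ - (-c)| ^ p := by
    linarith
  have hz4' : z.fst ⟨3, by omega⟩ = 0 := mid_c hc0 (abs_eq_of_P_eq hp0 q4)
  -- now the contradiction from s13
  rw [hx, hy, hz3', hz4'] at s13
  rw [show ((0:ℝ)) - ((0)) = ((0)) from by ring, show ((1:ℝ)) - ((0)) = ((1)) from by ring,
    show ((0:ℝ)) - ((c)) = ((-c)) from by ring, show ((1:ℝ)) - ((1)) = ((0)) from by ring]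
    at s13
  rw [vP0, vP1, vPmc] at s13
  linarith

end Stmt11

/-- Let `X` be any normed space, `d ≥ 4`, `q ∈ [1, ∞)`, and
`p = log(5/2)/log 2`. Then `m(ℓ_p^d ⊕_q X) ≤ 6`. -/
theorem statement11 (X : Type*) [NormedAddCommGroup X] [NormedSpace ℝ X]
    (d : ℕ) (hd : 4 ≤ d) (q : ℝ) (hq : 1 ≤ q)
    (p : ℝ) (hp : p = Real.log (5 / 2) / Real.log 2) :
    letI : Fact (1 ≤ ENNReal.ofReal p) := ⟨ENNReal.one_le_ofReal.mpr (by
      rw [hp, le_div_iff₀ (Real.log_pos (by norm_num))]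
      simpa using Real.log_le_log (by norm_num) (by norm_num : (2 : ℝ) ≤ 5 / 2))⟩
    letI : Fact (1 ≤ ENNReal.ofReal q) := ⟨ENNReal.one_le_ofReal.mpr hq⟩
    ∃ A : Set (WithLp (ENNReal.ofReal q)
        ((PiLp (ENNReal.ofReal p) fun _ : Fin d => ℝ) × X)),
      MaximalEquilateral A ∧ A.Finite ∧ A.ncard ≤ 6 := by
  letI : Fact (1 ≤ ENNReal.ofReal p) := ⟨ENNReal.one_le_ofReal.mpr (by
    rw [hp, le_div_iff₀ (Real.log_pos (by norm_num))]
    simpa using Real.log_le_log (by norm_num) (by norm_num : (2 : ℝ) ≤ 5 / 2))⟩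
  letI : Fact (1 ≤ ENNReal.ofReal q) := ⟨ENNReal.one_le_ofReal.mpr hq⟩
  exact Stmt11.core X d hd q hq p hp
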